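/- arXiv:2006.00218 — 2 statements merged into one kernel-verified Lean document; each statement's English description precedes it below -/
import Mathlib

section
/- For a continuously differentiable path X : [0,T] → ℝ^d and any two multi-indices I, J with entries in {1,…,d}, the shuffle identity holds: ⟨I ⧢ J, 𝕏_{s,t}⟩ = 𝕏_{s,t}^{(I)} · 𝕏_{s,t}^{(J)}, where ⧢ denotes the shuffle product of multi-indices extended linearly. -/
open intervalIntegral

/-- Auxiliary signature: recursion on the *reversed* multi-index. -/
noncomputable def sigAux {d : ℕ} (X : ℝ → Fin d → ℝ) (s : ℝ) : List (Fin d) → ℝ → ℝ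
  | [] => fun _ => (1 : ℝ)
  | a :: K => fun t => ∫ u in s..t, sigAux X s K u * deriv (fun v => X v a) u

/-- Signature term `𝕏_{s,t}^{(K)}` of a C¹ path: `𝕏^{(∅)} = 1` and
`𝕏_{s,t}^{(K̂ ⊗ a)} = ∫_s^t 𝕏_{s,u}^{(K̂)} (X^{(a)})'(u) du`. -/
noncomputable def sig {d : ℕ} (X : ℝ → Fin d → ℝ) (s t : ℝ) (K : List (Fin d)) : ℝ :=
  sigAux X s K.reverse t

/-- Shuffle product of two words, valued in formal sums (multisets) of words. -/
def shuffle {α : Type*} : List α → List α → Multiset (List α)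
  | [], J => {J}
  | a :: I, [] => {a :: I}
  | a :: I, b :: J =>
      ((shuffle I (b :: J)).map (a :: ·)) + ((shuffle (a :: I) J).map (b :: ·))
termination_by I J => I.length + J.length

lemma shuffle_nil_left {α : Type*} (J : List α) : shuffle [] J = {J} := by
  simp [shuffle]

lemma shuffle_nil_right {α : Type*} (P : List α) : shuffle P [] = {P} := by
  cases P <;> simp [shuffle]

lemma shuffle_cons_cons {α : Type*} (a b : α) (I J : List α) :
    shuffle (a :: I) (b :: J)
      = ((shuffle I (b :: J)).map (a :: ·)) + ((shuffle (a :: I) J).map (b :: ·)) := by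
  rw [shuffle]

lemma shuffle_concat {α : Type*} :
    ∀ (P Q : List α) (a b : α),
    shuffle (P ++ [a]) (Q ++ [b])
      = (shuffle P (Q ++ [b])).map (· ++ [a]) + (shuffle (P ++ [a]) Q).map (· ++ [b]) := by
  intro P
  induction P with
  | nil =>
    intro Q
    induction Q with
    | nil =>
      intro a b
      simp only [List.nil_append, shuffle_cons_cons, shuffle_nil_left, shuffle_nil_right]
      simp [add_comm]
    | cons c Q ihQ =>
      intro a b
      simp only [List.nil_append, List.cons_append, shuffle_cons_cons, shuffle_nil_left]
      rw [show ([a] : List α) = [] ++ [a] from rfl, ihQ a b]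
      simp only [shuffle_nil_left, Multiset.map_add, Multiset.map_map, Multiset.map_singleton,
        Function.comp, List.cons_append, List.append_assoc, List.singleton_append,
        List.nil_append]
      abel
  | cons p P ihP =>
    intro Q
    induction Q with
    | nil =>
      intro a b
      simp only [List.cons_append, List.nil_append, shuffle_cons_cons, shuffle_nil_right]
      rw [show ([b] : List α) = [] ++ [b] from rfl, ihP [] a b]
      simp only [shuffle_nil_right, shuffle_nil_left, Multiset.map_add, Multiset.map_map,
        Multiset.map_singleton, Function.comp, List.cons_append, List.append_assoc,
        List.singleton_append, List.nil_append]
      abel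
    | cons c Q ihQ =>
      intro a b
      simp only [List.cons_append, shuffle_cons_cons]
      rw [show (c :: (Q ++ [b])) = (c :: Q) ++ [b] from rfl, ihP (c :: Q) a b,
        show (p :: (P ++ [a])) = (p :: P) ++ [a] from rfl, ihQ a b]
      simp only [shuffle_cons_cons, List.cons_append, Multiset.map_add, Multiset.map_map,
        Function.comp, List.append_assoc, List.singleton_append]
      abel

lemma shuffle_reverse {α : Type*} :
    ∀ (I J : List α), (shuffle I J).map List.reverse = shuffle I.reverse J.reverse := by
  intro I
  induction I with
  | nil => intro J; simp [shuffle_nil_left, shuffle_nil_right]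
  | cons a I ihI =>
    intro J
    induction J with
    | nil => simp [shuffle_nil_left, shuffle_nil_right]
    | cons b J ihJ =>
      rw [shuffle_cons_cons]
      simp only [Multiset.map_add, Multiset.map_map, Function.comp, List.reverse_cons]
      rw [shuffle_concat]
      have h1 : ((shuffle I (b :: J)).map fun K => (a :: K).reverse)
          = (shuffle I.reverse (J.reverse ++ [b])).map (· ++ [a]) := by
        have := ihI (b :: J)
        simp only [List.reverse_cons] at this
        rw [← this, Multiset.map_map]
        simp [Function.comp, List.reverse_cons]
      have h2 : ((shuffle (a :: I) J).map fun K => (b :: K).reverse)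
          = (shuffle (I.reverse ++ [a]) J.reverse).map (· ++ [b]) := by
        have := ihJ
        simp only [List.reverse_cons] at this
        rw [← this, Multiset.map_map]
        simp [Function.comp, List.reverse_cons]
      simp only [List.reverse_cons] at h1 h2
      rw [← h1, ← h2]

section Analytic

open MeasureTheory

variable {d : ℕ} {X : ℝ → Fin d → ℝ} {s : ℝ}

lemma sigAux_cons (a : Fin d) (L : List (Fin d)) (t : ℝ) :
    sigAux X s (a :: L) t = ∫ u in s..t, sigAux X s L u * deriv (fun v => X v a) u := rfl

lemma deriv_cont (hX : ∀ a, ContDiff ℝ 1 fun u => X u a) (a : Fin d) :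
    Continuous (deriv fun v => X v a) := (hX a).continuous_deriv le_rfl

lemma sigAux_cont (hX : ∀ a, ContDiff ℝ 1 fun u => X u a) :
    ∀ L : List (Fin d), Continuous (sigAux X s L) := by
  intro L
  induction L with
  | nil => exact continuous_const
  | cons a L ih =>
    have hg : Continuous fun u => sigAux X s L u * deriv (fun v => X v a) u :=
      ih.mul (deriv_cont hX a)
    have h : ∀ t : ℝ, HasDerivAt (sigAux X s (a :: L))
        (sigAux X s L t * deriv (fun v => X v a) t) t := by
      intro t
      have := intervalIntegral.integral_hasDerivAt_right (hg.intervalIntegrable s t)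
        (hg.stronglyMeasurableAtFilter volume (nhds t)) hg.continuousAt
      exact this
    have hd : Differentiable ℝ (sigAux X s (a :: L)) := fun t => (h t).differentiableAt
    exact hd.continuous

lemma sigAux_hasDerivAt (hX : ∀ a, ContDiff ℝ 1 fun u => X u a)
    (a : Fin d) (L : List (Fin d)) (t : ℝ) :
    HasDerivAt (sigAux X s (a :: L)) (sigAux X s L t * deriv (fun v => X v a) t) t := by
  have hg : Continuous fun u => sigAux X s L u * deriv (fun v => X v a) u :=
    (sigAux_cont hX L).mul (deriv_cont hX a)
  exact intervalIntegral.integral_hasDerivAt_right (hg.intervalIntegrable s t)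
    (hg.stronglyMeasurableAtFilter volume (nhds t)) hg.continuousAt

lemma sigAux_cons_self (a : Fin d) (L : List (Fin d)) :
    sigAux X s (a :: L) s = 0 := by
  rw [sigAux_cons, intervalIntegral.integral_same]

lemma hasDerivAt_msum {α : Type*} (m : Multiset α) (F : α → ℝ → ℝ) (F' : α → ℝ) (t : ℝ)
    (h : ∀ K ∈ m, HasDerivAt (F K) (F' K) t) :
    HasDerivAt (fun u => ((m.map fun K => F K u)).sum) ((m.map F').sum) t := by
  induction m using Multiset.induction with
  | empty => simpa using hasDerivAt_const t (0 : ℝ)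
  | cons a m ih =>
    simp only [Multiset.map_cons, Multiset.sum_cons]
    exact (h a (Multiset.mem_cons_self a m)).add
      (ih fun K hK => h K (Multiset.mem_cons_of_mem hK))

lemma shuffle_key (hX : ∀ a, ContDiff ℝ 1 fun u => X u a) :
    ∀ (P Q : List (Fin d)) (t : ℝ),
      ((shuffle P Q).map fun K => sigAux X s K t).sum = sigAux X s P t * sigAux X s Q t := by
  intro P
  induction P with
  | nil => intro Q t; simp [shuffle_nil_left, sigAux]
  | cons a P ihP =>
    intro Q
    induction Q with
    | nil => intro t; simp [shuffle_nil_right, sigAux]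
    | cons b Q ihQ =>
      intro t
      set F : List (Fin d) → ℝ → ℝ := fun K u => sigAux X s K u with hF
      have hL : ∀ u : ℝ, HasDerivAt
          (fun u => ((shuffle (a :: P) (b :: Q)).map fun K => sigAux X s K u).sum)
          (sigAux X s P u * sigAux X s (b :: Q) u * deriv (fun v => X v a) u
            + sigAux X s (a :: P) u * sigAux X s Q u * deriv (fun v => X v b) u) u := by
        intro u
        have e : ∀ w : ℝ, ((shuffle (a :: P) (b :: Q)).map fun K => sigAux X s K w).sum
            = ((shuffle P (b :: Q)).map fun K => sigAux X s (a :: K) w).sum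
              + ((shuffle (a :: P) Q).map fun K => sigAux X s (b :: K) w).sum := by
          intro w
          rw [shuffle_cons_cons]
          simp [Multiset.map_map, Function.comp]
        have h1 : HasDerivAt
            (fun w => ((shuffle P (b :: Q)).map fun K => sigAux X s (a :: K) w).sum)
            (((shuffle P (b :: Q)).map
              fun K => sigAux X s K u * deriv (fun v => X v a) u).sum) u :=
          hasDerivAt_msum _ _ _ u fun K _ => sigAux_hasDerivAt hX a K u
        have h2 : HasDerivAt
            (fun w => ((shuffle (a :: P) Q).map fun K => sigAux X s (b :: K) w).sum)
            (((shuffle (a :: P) Q).map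
              fun K => sigAux X s K u * deriv (fun v => X v b) u).sum) u :=
          hasDerivAt_msum _ _ _ u fun K _ => sigAux_hasDerivAt hX b K u
        have h3 := h1.add h2
        rw [Multiset.sum_map_mul_right, Multiset.sum_map_mul_right, ihP (b :: Q) u, ihQ u] at h3
        exact h3.congr_of_eventuallyEq (Filter.Eventually.of_forall e)
      have hR : ∀ u : ℝ, HasDerivAt
          (fun u => sigAux X s (a :: P) u * sigAux X s (b :: Q) u)
          (sigAux X s P u * sigAux X s (b :: Q) u * deriv (fun v => X v a) u
            + sigAux X s (a :: P) u * sigAux X s Q u * deriv (fun v => X v b) u) u := by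
        intro u
        have := (sigAux_hasDerivAt (s := s) hX a P u).mul (sigAux_hasDerivAt (s := s) hX b Q u)
        exact this.congr_deriv (by ring)
      have hdiff : ∀ u : ℝ, HasDerivAt
          (fun u => ((shuffle (a :: P) (b :: Q)).map fun K => sigAux X s K u).sum
            - sigAux X s (a :: P) u * sigAux X s (b :: Q) u) 0 u := by
        intro u
        have := (hL u).sub (hR u)
        exact this.congr_deriv (sub_self _)
      have hconst := is_const_of_deriv_eq_zero
        (f := fun u => ((shuffle (a :: P) (b :: Q)).map fun K => sigAux X s K u).sum
          - sigAux X s (a :: P) u * sigAux X s (b :: Q) u)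
        (fun u => (hdiff u).differentiableAt) (fun u => (hdiff u).deriv) t s
      have hzero : ((shuffle (a :: P) (b :: Q)).map fun K => sigAux X s K s).sum
          - sigAux X s (a :: P) s * sigAux X s (b :: Q) s = 0 := by
        rw [shuffle_cons_cons]
        simp [Multiset.map_map, Function.comp, sigAux_cons_self]
      have := hconst.trans hzero
      linarith [this]

end Analytic

/-- shuffle identity `⟨I ⧢ J, 𝕏_{s,t}⟩ = 𝕏_{s,t}^{(I)} · 𝕏_{s,t}^{(J)}`
for a C¹ path `X : [0,T] → ℝ^d`. -/
theorem shuffle_identity {d : ℕ} (T : ℝ) (X : ℝ → Fin d → ℝ)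
    (hX : ∀ a, ContDiff ℝ 1 fun u => X u a)
    (s t : ℝ) (hs : 0 ≤ s) (hst : s ≤ t) (ht : t ≤ T)
    (I J : List (Fin d)) :
    ((shuffle I J).map (sig X s t)).sum = sig X s t I * sig X s t J := by
  have h : ((shuffle I J).map (sig X s t))
      = ((shuffle I.reverse J.reverse).map fun K => sigAux X s K t) := by
    rw [← shuffle_reverse, Multiset.map_map]
    rfl
  rw [h, shuffle_key hX]
  rfl
end

section
/- Chen's identity: for a continuously differentiable path X : [0,T] → ℝ^d, any 0 ≤ s ≤ u ≤ t ≤ T, and any multi-index K = (k_1,…,k_n), the signature satisfies 𝕏_{s,t}^{(K)} = Σ_{I⊗J = K} 𝕏_{s,u}^{(I)} · 𝕏_{u,t}^{(J)}, where the sum runs over all (possibly empty) prefix–suffix decompositions of K. -/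
open intervalIntegral

lemma sigAux_continuous {d : ℕ} {X : ℝ → Fin d → ℝ}
    (hX : ∀ a, ContDiff ℝ 1 fun v => X v a) (s : ℝ) :
    ∀ K : List (Fin d), Continuous (sigAux X s K)
  | [] => continuous_const
  | a :: K => by
      have h := (sigAux_continuous hX s K).mul ((hX a).continuous_deriv le_rfl)
      exact intervalIntegral.continuous_primitive (fun a b => h.intervalIntegrable a b) s

lemma sig_snoc {d : ℕ} (X : ℝ → Fin d → ℝ) (s t : ℝ) (K : List (Fin d)) (a : Fin d) :
    sig X s t (K ++ [a]) = ∫ v in s..t, sig X s v K * deriv (fun w => X w a) v := by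
  simp [sig, sigAux, List.reverse_append]

lemma chen_aux {d : ℕ} (X : ℝ → Fin d → ℝ)
    (hX : ∀ a, ContDiff ℝ 1 fun v => X v a) :
    ∀ (K : List (Fin d)) (s u t : ℝ),
      sig X s t K =
        ∑ i ∈ Finset.range (K.length + 1), sig X s u (K.take i) * sig X u t (K.drop i) := by
  intro K
  induction K using List.reverseRecOn with
  | nil => intro s u t; simp [sig, sigAux]
  | append_singleton K a ih =>
    intro s u t
    set f := fun v : ℝ => deriv (fun w => X w a) v with hf
    have hcont : ∀ (s₀ : ℝ) (L : List (Fin d)),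
        Continuous fun v => sig X s₀ v L * f v := fun s₀ L =>
      (sigAux_continuous hX s₀ L.reverse).mul ((hX a).continuous_deriv le_rfl)
    have hsplit : sig X s t (K ++ [a])
        = (∫ v in s..u, sig X s v K * f v) + ∫ v in u..t, sig X s v K * f v := by
      rw [sig_snoc]
      exact (intervalIntegral.integral_add_adjacent_intervals
        ((hcont s K).intervalIntegrable s u) ((hcont s K).intervalIntegrable u t)).symm
    have h1 : (∫ v in s..u, sig X s v K * f v) = sig X s u (K ++ [a]) :=
      (sig_snoc X s u K a).symm
    have h2 : (∫ v in u..t, sig X s v K * f v)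
        = ∑ i ∈ Finset.range (K.length + 1),
            sig X s u (K.take i) * sig X u t (K.drop i ++ [a]) := by
      have : ∀ v : ℝ, sig X s v K * f v
          = ∑ i ∈ Finset.range (K.length + 1),
              sig X s u (K.take i) * (sig X u v (K.drop i) * f v) := by
        intro v
        rw [ih s u v, Finset.sum_mul]
        exact Finset.sum_congr rfl fun i _ => by ring
      rw [intervalIntegral.integral_congr (fun v _ => this v)]
      rw [intervalIntegral.integral_finset_sum (f := fun i v => sig X s u (K.take i) * (sig X u v (K.drop i) * f v)) (fun i _ =>
        ((continuous_const.mul (hcont u (K.drop i)) : Continuous fun v => sig X s u (K.take i) * (sig X u v (K.drop i) * f v)).intervalIntegrable u t))]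
      refine Finset.sum_congr rfl fun i _ => ?_
      rw [intervalIntegral.integral_const_mul, sig_snoc]
    have hlast : ∑ i ∈ Finset.range ((K ++ [a]).length + 1),
        sig X s u ((K ++ [a]).take i) * sig X u t ((K ++ [a]).drop i)
        = (∑ i ∈ Finset.range (K.length + 1),
            sig X s u (K.take i) * sig X u t (K.drop i ++ [a]))
          + sig X s u (K ++ [a]) := by
      rw [List.length_append, List.length_singleton, Finset.sum_range_succ]
      congr 1
      · refine Finset.sum_congr rfl fun i hi => ?_
        have hi' : i ≤ K.length := Nat.lt_succ_iff.mp (Finset.mem_range.mp hi)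
        rw [List.take_append_of_le_length hi', List.drop_append_of_le_length hi']
      · have h3 : (K ++ [a]).take (K.length + 1) = K ++ [a] := by
          apply List.take_of_length_le; simp
        have h4 : (K ++ [a]).drop (K.length + 1) = [] := by
          apply List.drop_of_length_le; simp
        rw [h3, h4]
        simp [sig, sigAux]
    rw [hsplit, h1, h2, hlast]; ring

/-- Chen's identity.  For any `s ≤ u ≤ t` and any multi-index `K`,
`𝕏_{s,t}^{(K)} = Σ_{I ⊗ J = K} 𝕏_{s,u}^{(I)} · 𝕏_{u,t}^{(J)}`, the sum running over all
prefix–suffix decompositions of `K`. -/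
theorem chen_identity {d : ℕ} (T : ℝ) (X : ℝ → Fin d → ℝ)
    (hX : ∀ a, ContDiff ℝ 1 fun v => X v a)
    (s u t : ℝ) (hs : 0 ≤ s) (hsu : s ≤ u) (hut : u ≤ t) (ht : t ≤ T)
    (K : List (Fin d)) :
    sig X s t K =
      ∑ i ∈ Finset.range (K.length + 1), sig X s u (K.take i) * sig X u t (K.drop i) := by
  exact chen_aux X hX K s u t
end
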